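/- Let A : H → H be a bounded normal operator and S = {x_1,…,x_N} a finite subset of H such that the iterative system {A^n x_i : n ≥ 0, 1 ≤ i ≤ N} (with all terms nonzero) is a frame for H. Then ‖A^n x_i‖ → 0 as n → ∞ for every i, and consequently the normalized system {A^n x_i/‖A^n x_i‖} is not a Bessel sequence (hence not a frame) for H, provided H is infinite-dimensional. -/

import Mathlib

open scoped ComplexInnerProductSpace ENNReal
open Filter Topology

noncomputable section

variable {E : Type*} [NormedAddCommGroup E] [InnerProductSpace ℂ E]

/-- `y` is a Bessel sequence with Bessel bound `B`:
`∑ᵢ |⟪z, yᵢ⟫|² ≤ B‖z‖²` for all `z` (sum taken in `ℝ≥0∞` so that divergence is handled). -/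
def BesselWith {ι : Type*} (y : ι → E) (B : ℝ) : Prop :=
  ∀ z : E, ∑' i, ENNReal.ofReal (‖⟪z, y i⟫‖ ^ 2) ≤ ENNReal.ofReal (B * ‖z‖ ^ 2)

/-- `y` satisfies the lower frame condition with bound `A`:
`A‖z‖² ≤ ∑ᵢ |⟪z, yᵢ⟫|²` for all `z`. -/
def LowerFrameWith {ι : Type*} (y : ι → E) (A : ℝ) : Prop :=
  ∀ z : E, ENNReal.ofReal (A * ‖z‖ ^ 2) ≤ ∑' i, ENNReal.ofReal (‖⟪z, y i⟫‖ ^ 2)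

/-- `y` is a frame with frame bounds `A ≤ B`. -/
def FrameWith {ι : Type*} (y : ι → E) (A B : ℝ) : Prop :=
  0 < A ∧ A ≤ B ∧ LowerFrameWith y A ∧ BesselWith y B

/-- The normalized sequence `yᵢ/‖yᵢ‖`. -/
def normalizeSeq {ι : Type*} (y : ι → E) : ι → E := fun i => (‖y i‖ : ℂ)⁻¹ • y i

set_option maxHeartbeats 1000000 in
/-- If `A` is normal, `S = {x₁,…,x_N}` finite, and the iterative system
`{Aⁿxᵢ}` (all nonzero) is a frame for the infinite-dimensional space `H`, then
`‖Aⁿxᵢ‖ → 0` for each `i` and the normalized system is not a Bessel sequence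
(hence not a frame). -/
theorem stmt18 {H : Type*} [NormedAddCommGroup H] [InnerProductSpace ℂ H] [CompleteSpace H]
    (hinf : ¬ FiniteDimensional ℂ H)
    (A : H →L[ℂ] H)
    (hnormal : (ContinuousLinearMap.adjoint A).comp A = A.comp (ContinuousLinearMap.adjoint A))
    (N : ℕ) (x : Fin N → H)
    (hnz : ∀ (n : ℕ) (i : Fin N), (A ^ n) (x i) ≠ 0)
    (hframe : ∃ A' B' : ℝ, FrameWith (fun p : ℕ × Fin N => (A ^ p.1) (x p.2)) A' B') :
    (∀ i : Fin N, Tendsto (fun n : ℕ => ‖(A ^ n) (x i)‖) atTop (𝓝 0)) ∧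
      ¬ ∃ B : ℝ, BesselWith (normalizeSeq (fun p : ℕ × Fin N => (A ^ p.1) (x p.2))) B := by
  classical
  obtain ⟨α, β, hα, hαβ, hlow, hup⟩ := hframe
  set T := ContinuousLinearMap.adjoint A with hTdef
  -- A and T commute
  have hcomm : Commute A T := by
    show A * T = T * A
    rw [ContinuousLinearMap.mul_def, ContinuousLinearMap.mul_def]
    exact hnormal.symm
  have hadjpow : ∀ n : ℕ, ContinuousLinearMap.adjoint (A ^ n) = T ^ n := by
    intro n
    rw [← ContinuousLinearMap.star_eq_adjoint, star_pow, ContinuousLinearMap.star_eq_adjoint]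
  have hadj : ∀ (n : ℕ) (z w : H), ⟪z, (A ^ n) w⟫ = ⟪(T ^ n) z, w⟫ := by
    intro n z w
    rw [← hadjpow n, ContinuousLinearMap.adjoint_inner_left]
  -- equality of norms of A^n w and T^n w (normality)
  have hnormeq : ∀ (n : ℕ) (w : H), ‖(A ^ n) w‖ = ‖(T ^ n) w‖ := by
    intro n w
    have hc : (T ^ n).comp (A ^ n) = (A ^ n).comp (T ^ n) := by
      rw [← ContinuousLinearMap.mul_def, ← ContinuousLinearMap.mul_def]
      exact ((hcomm.symm).pow_pow n n)
    have h1 : ⟪(A ^ n) w, (A ^ n) w⟫ = ⟪(T ^ n) w, (T ^ n) w⟫ := by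
      calc ⟪(A ^ n) w, (A ^ n) w⟫ = ⟪(T ^ n) ((A ^ n) w), w⟫ := (hadj n _ w)
        _ = ⟪(A ^ n) ((T ^ n) w), w⟫ := by
              rw [← ContinuousLinearMap.comp_apply, ← ContinuousLinearMap.comp_apply, hc]
        _ = ⟪(T ^ n) w, (T ^ n) w⟫ := by
              rw [← inner_conj_symm, hadj n, inner_conj_symm]
    have h2 : ‖(A ^ n) w‖ ^ 2 = ‖(T ^ n) w‖ ^ 2 := by
      rw [← inner_self_eq_norm_sq (𝕜 := ℂ), ← inner_self_eq_norm_sq (𝕜 := ℂ), h1]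
    have := congrArg Real.sqrt h2
    rwa [Real.sqrt_sq (norm_nonneg _), Real.sqrt_sq (norm_nonneg _)] at this
  -- the partial (over i) frame sums
  set F : H → ℕ → ℝ≥0∞ :=
    fun z n => ∑ i : Fin N, ENNReal.ofReal (‖⟪z, (A ^ n) (x i)⟫‖ ^ 2) with hFdef
  have htsumF : ∀ z : H,
      ∑' p : ℕ × Fin N, ENNReal.ofReal (‖⟪z, (A ^ p.1) (x p.2)⟫‖ ^ 2) = ∑' n, F z n := by
    intro z
    rw [ENNReal.tsum_prod (f := fun (n : ℕ) (i : Fin N) => ENNReal.ofReal (‖⟪z, (A ^ n) (x i)⟫‖ ^ 2))]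
    exact tsum_congr fun n => tsum_fintype _
  have hFle : ∀ z : H, ∑' n, F z n ≤ ENNReal.ofReal (β * ‖z‖ ^ 2) := by
    intro z; rw [← htsumF]; exact hup z
  have hFge : ∀ z : H, ENNReal.ofReal (α * ‖z‖ ^ 2) ≤ ∑' n, F z n := by
    intro z; rw [← htsumF]; exact hlow z
  have hshift : ∀ (z : H) (m n : ℕ), F z (n + m) = F ((T ^ m) z) n := by
    intro z m n
    refine Finset.sum_congr rfl fun i _ => ?_
    congr 2
    rw [hadj, hadj, pow_add, ContinuousLinearMap.mul_apply]
  -- key: ‖T^m z‖ → 0 for every z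
  have hkey : ∀ z : H, Tendsto (fun m : ℕ => ‖(T ^ m) z‖) atTop (𝓝 0) := by
    intro z
    have hne : ∑' n, F z n ≠ ⊤ :=
      ne_top_of_le_ne_top ENNReal.ofReal_ne_top (hFle z)
    have htail : Tendsto (fun m => ∑' n, F z (n + m)) atTop (𝓝 0) :=
      ENNReal.tendsto_sum_nat_add (F z) hne
    have hsq : Tendsto (fun m : ℕ => ENNReal.ofReal (α * ‖(T ^ m) z‖ ^ 2)) atTop (𝓝 0) := by
      refine tendsto_of_tendsto_of_tendsto_of_le_of_le tendsto_const_nhds htail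
        (fun m => zero_le) (fun m => ?_)
      have := hFge ((T ^ m) z)
      calc ENNReal.ofReal (α * ‖(T ^ m) z‖ ^ 2) ≤ ∑' n, F ((T ^ m) z) n := this
        _ = ∑' n, F z (n + m) := by exact tsum_congr fun n => (hshift z m n).symm
    have hreal : Tendsto (fun m : ℕ => α * ‖(T ^ m) z‖ ^ 2) atTop (𝓝 0) := by
      have h0 : Tendsto (fun m : ℕ => (ENNReal.ofReal (α * ‖(T ^ m) z‖ ^ 2)).toReal)
          atTop (𝓝 (0 : ℝ≥0∞).toReal) :=
        (ENNReal.tendsto_toReal ENNReal.zero_ne_top).comp hsq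
      simpa [ENNReal.toReal_ofReal (mul_nonneg hα.le (sq_nonneg _))] using h0
    have hsq2 : Tendsto (fun m : ℕ => ‖(T ^ m) z‖ ^ 2) atTop (𝓝 0) := by
      have := hreal.const_mul (α⁻¹)
      simpa [← mul_assoc, inv_mul_cancel₀ hα.ne'] using this
    have : Tendsto (fun m : ℕ => Real.sqrt (‖(T ^ m) z‖ ^ 2)) atTop (𝓝 (Real.sqrt 0)) :=
      hsq2.sqrt
    simpa [Real.sqrt_sq (norm_nonneg _)] using this
  have part1 : ∀ i : Fin N, Tendsto (fun n : ℕ => ‖(A ^ n) (x i)‖) atTop (𝓝 0) := by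
    intro i
    have := hkey (x i)
    simpa only [hnormeq] using this
  refine ⟨part1, ?_⟩
  rintro ⟨B, hB⟩
  set y : ℕ × Fin N → H := fun p => (A ^ p.1) (x p.2) with hydef
  set β' : ℝ := max B 0 with hβ'
  have hβ'0 : 0 ≤ β' := le_max_right _ _
  have hB' : BesselWith (normalizeSeq y) β' := by
    intro z
    exact (hB z).trans (ENNReal.ofReal_le_ofReal
      (mul_le_mul_of_nonneg_right (le_max_left _ _) (sq_nonneg _)))
  set c : ℝ := α / (2 * (β' + 1)) with hc
  have hcpos : 0 < c := div_pos hα (by linarith)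
  have hcβ : c * β' ≤ α / 2 := by
    rw [hc, div_mul_eq_mul_div, div_le_div_iff₀ (by linarith) (by norm_num)]
    nlinarith
  -- relation between inner products with y and normalized y
  have hnorm_rel : ∀ (z : H) (p : ℕ × Fin N),
      ‖⟪z, y p⟫‖ ^ 2 = ‖y p‖ ^ 2 * ‖⟪z, normalizeSeq y p⟫‖ ^ 2 := by
    intro z p
    have hy0 : ‖y p‖ ≠ 0 := norm_ne_zero_iff.mpr (hnz p.1 p.2)
    have : ⟪z, normalizeSeq y p⟫ = (‖y p‖ : ℂ)⁻¹ * ⟪z, y p⟫ := by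
      rw [normalizeSeq, inner_smul_right]
    rw [this]
    rw [norm_mul, mul_pow, norm_inv, Complex.norm_real, Real.norm_eq_abs,
      abs_of_nonneg (norm_nonneg _)]
    field_simp
  -- choose M beyond which ‖y (n,i)‖² ≤ c
  have hev : ∀ᶠ n : ℕ in atTop, ∀ i : Fin N, ‖(A ^ n) (x i)‖ ^ 2 ≤ c := by
    rw [Filter.eventually_all]
    intro i
    have : Tendsto (fun n : ℕ => ‖(A ^ n) (x i)‖ ^ 2) atTop (𝓝 0) := by
      simpa using (part1 i).pow 2
    exact this.eventually_le_const hcpos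
  obtain ⟨M, hM⟩ := Filter.eventually_atTop.mp hev
  -- the tail estimate
  have htail : ∀ z : H,
      ∑' n, F z (n + M) ≤ ENNReal.ofReal (c * (β' * ‖z‖ ^ 2)) := by
    intro z
    have step1 : ∀ n : ℕ, F z (n + M) ≤
        ENNReal.ofReal c * ∑ i : Fin N,
          ENNReal.ofReal (‖⟪z, normalizeSeq y (n + M, i)⟫‖ ^ 2) := by
      intro n
      rw [Finset.mul_sum]
      refine Finset.sum_le_sum fun i _ => ?_
      rw [← ENNReal.ofReal_mul hcpos.le]
      apply ENNReal.ofReal_le_ofReal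
      have := hnorm_rel z (n + M, i)
      rw [show ⟪z, (A ^ (n + M)) (x i)⟫ = ⟪z, y (n + M, i)⟫ from rfl, this]
      exact mul_le_mul_of_nonneg_right (hM (n + M) (Nat.le_add_left _ _) i) (sq_nonneg _)
    calc ∑' n, F z (n + M)
        ≤ ∑' n, ENNReal.ofReal c * ∑ i : Fin N,
            ENNReal.ofReal (‖⟪z, normalizeSeq y (n + M, i)⟫‖ ^ 2) :=
          ENNReal.tsum_le_tsum step1
      _ = ENNReal.ofReal c * ∑' n, ∑ i : Fin N,
            ENNReal.ofReal (‖⟪z, normalizeSeq y (n + M, i)⟫‖ ^ 2) := ENNReal.tsum_mul_left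
      _ ≤ ENNReal.ofReal c * ∑' n, ∑ i : Fin N,
            ENNReal.ofReal (‖⟪z, normalizeSeq y (n, i)⟫‖ ^ 2) := by
          refine mul_le_mul_right ?_ _
          exact ENNReal.tsum_comp_le_tsum_of_injective (add_left_injective M)
            (fun n => ∑ i : Fin N, ENNReal.ofReal (‖⟪z, normalizeSeq y (n, i)⟫‖ ^ 2))
      _ = ENNReal.ofReal c *
            ∑' p : ℕ × Fin N, ENNReal.ofReal (‖⟪z, normalizeSeq y p⟫‖ ^ 2) := by
          rw [ENNReal.tsum_prod (f := fun (n : ℕ) (i : Fin N) =>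
            ENNReal.ofReal (‖⟪z, normalizeSeq y (n, i)⟫‖ ^ 2))]
          congr 1
          exact (tsum_congr fun n => (tsum_fintype _)).symm
      _ ≤ ENNReal.ofReal c * ENNReal.ofReal (β' * ‖z‖ ^ 2) := mul_le_mul_right (hB' z) _
      _ = ENNReal.ofReal (c * (β' * ‖z‖ ^ 2)) :=
          (ENNReal.ofReal_mul hcpos.le).symm
  -- deduce a finite lower-frame inequality
  have hfin : ∀ z : H,
      ENNReal.ofReal (α / 2 * ‖z‖ ^ 2) ≤ ∑ n ∈ Finset.range M, F z n := by
    intro z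
    have hsplit : ∑ n ∈ Finset.range M, F z n + ∑' n, F z (n + M) = ∑' n, F z n :=
      Summable.sum_add_tsum_nat_add' (f := F z) (k := M) ENNReal.summable
    have h1 : ENNReal.ofReal (α * ‖z‖ ^ 2) ≤
        ∑ n ∈ Finset.range M, F z n + ENNReal.ofReal (α / 2 * ‖z‖ ^ 2) := by
      calc ENNReal.ofReal (α * ‖z‖ ^ 2) ≤ ∑' n, F z n := hFge z
        _ = ∑ n ∈ Finset.range M, F z n + ∑' n, F z (n + M) := hsplit.symm
        _ ≤ ∑ n ∈ Finset.range M, F z n + ENNReal.ofReal (α / 2 * ‖z‖ ^ 2) := by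
            refine add_le_add_right ((htail z).trans (ENNReal.ofReal_le_ofReal ?_)) _
            calc c * (β' * ‖z‖ ^ 2) = (c * β') * ‖z‖ ^ 2 := by ring
              _ ≤ α / 2 * ‖z‖ ^ 2 := mul_le_mul_of_nonneg_right hcβ (sq_nonneg _)
    have h2 : ENNReal.ofReal (α * ‖z‖ ^ 2)
        = ENNReal.ofReal (α / 2 * ‖z‖ ^ 2) + ENNReal.ofReal (α / 2 * ‖z‖ ^ 2) := by
      rw [← ENNReal.ofReal_add (by positivity) (by positivity)]
      ring_nf
    rw [h2] at h1
    exact (ENNReal.add_le_add_iff_right ENNReal.ofReal_ne_top).mp h1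
  -- find a nonzero vector orthogonal to all y (n,i), n < M
  set V : Set H := Set.range (fun p : Fin M × Fin N => (A ^ (p.1 : ℕ)) (x p.2)) with hV
  set K : Submodule ℂ H := Submodule.span ℂ V with hK
  haveI : FiniteDimensional ℂ K := FiniteDimensional.span_of_finite ℂ (Set.finite_range _)
  have hKne : Kᗮ ≠ ⊥ := by
    intro hbot
    apply hinf
    have htop : K = ⊤ := Submodule.orthogonal_eq_bot_iff.mp hbot
    have : FiniteDimensional ℂ (⊤ : Submodule ℂ H) := htop ▸ inferInstance
    exact Module.Finite.equiv (Submodule.topEquiv (R := ℂ) (M := H))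
  obtain ⟨z, hzK, hz0⟩ := Submodule.exists_mem_ne_zero_of_ne_bot hKne
  have hzinner : ∀ n < M, ∀ i : Fin N, ⟪z, (A ^ n) (x i)⟫ = 0 := by
    intro n hn i
    have hmem : (A ^ n) (x i) ∈ K := Submodule.subset_span ⟨(⟨n, hn⟩, i), rfl⟩
    have := hzK ((A ^ n) (x i)) hmem
    rw [← inner_conj_symm, this, map_zero]
  have hzero : ∑ n ∈ Finset.range M, F z n = 0 := by
    refine Finset.sum_eq_zero fun n hn => ?_
    refine Finset.sum_eq_zero fun i _ => ?_
    rw [hzinner n (Finset.mem_range.mp hn) i]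
    simp
  have := hfin z
  rw [hzero, le_zero_iff, ENNReal.ofReal_eq_zero] at this
  have hz : 0 < ‖z‖ ^ 2 := pow_pos (norm_pos_iff.mpr hz0) 2
  nlinarith
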